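/- For a simple symmetric random walk, the probability that the last visit to 0 before an even time 2m occurs at time 2k is u_{2k}·u_{2m−2k}, where u_{2j} = C(2j,j)/2^{2j}. -/

import Mathlib

open MeasureTheory Real ProbabilityTheory

namespace SRWAux

def bval (b : Bool) : ℤ := if b then 1 else -1

lemma bval_true : bval true = 1 := rfl
lemma bval_false : bval false = -1 := rfl

def psum (a : ℕ → Bool) (k : ℕ) : ℤ := ∑ i ∈ Finset.range k, bval (a i)

lemma psum_zero (a : ℕ → Bool) : psum a 0 = 0 := by simp [psum]

lemma psum_succ (a : ℕ → Bool) (k : ℕ) : psum a (k+1) = psum a k + bval (a k) :=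
  Finset.sum_range_succ _ _

lemma psum_succ' (a : ℕ → Bool) (k : ℕ) :
    psum a (k+1) = bval (a 0) + psum (fun i => a (i+1)) k := by
  rw [psum, Finset.sum_range_succ', add_comm]; rfl

lemma psum_congr {a b : ℕ → Bool} {k : ℕ} (h : ∀ i < k, a i = b i) :
    psum a k = psum b k :=
  Finset.sum_congr rfl fun i hi => by rw [h i (Finset.mem_range.1 hi)]

lemma psum_add (a : ℕ → Bool) (c t : ℕ) :
    psum a (c + t) = psum a c + psum (fun i => a (c + i)) t := by
  induction t with
  | zero => simp [psum]
  | succ t ih =>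
      rw [show c + (t+1) = (c+t)+1 by omega, psum_succ, ih, psum_succ]
      ring

lemma psum_le (a : ℕ → Bool) (k : ℕ) : psum a k ≤ k := by
  calc psum a k ≤ ∑ _i ∈ Finset.range k, (1:ℤ) := by
        apply Finset.sum_le_sum
        intro i _
        cases a i <;> simp [bval]
    _ = k := by simp

def ext {n : ℕ} (s : Fin n → Bool) : ℕ → Bool :=
  fun i => if h : i < n then s ⟨i, h⟩ else false

lemma ext_lt {n : ℕ} (s : Fin n → Bool) {i : ℕ} (h : i < n) : ext s i = s ⟨i, h⟩ :=
  dif_pos h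

lemma ext_cons_zero {n : ℕ} (b : Bool) (t : Fin n → Bool) :
    ext (Fin.cons b t) 0 = b := by
  rw [ext_lt (Fin.cons b t) (Nat.succ_pos n)]
  exact Fin.cons_zero _ _

lemma ext_cons_succ {n : ℕ} (b : Bool) (t : Fin n → Bool) (i : ℕ) :
    ext (Fin.cons b t) (i+1) = ext t i := by
  by_cases h : i < n
  · rw [ext_lt (Fin.cons b t) (by omega : i + 1 < n + 1), ext_lt t h]
    exact @Fin.cons_succ n (fun _ => Bool) b t ⟨i, h⟩
  · simp only [ext, dif_neg h, dif_neg (by omega : ¬ i + 1 < n + 1)]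

lemma psum_ext_cons {n : ℕ} (b : Bool) (t : Fin n → Bool) (k : ℕ) :
    psum (ext (Fin.cons b t)) (k+1) = bval b + psum (ext t) k := by
  rw [psum_succ', ext_cons_zero]
  congr 1
  exact psum_congr fun i _ => ext_cons_succ b t i

lemma card_filter_succ {n : ℕ} (Q : (Fin (n+1) → Bool) → Prop) [DecidablePred Q] :
    (Finset.univ.filter Q).card
      = (Finset.univ.filter fun t : Fin n → Bool => Q (Fin.cons true t)).card
        + (Finset.univ.filter fun t : Fin n → Bool => Q (Fin.cons false t)).card := by
  rw [Finset.card_filter, Finset.card_filter, Finset.card_filter]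
  rw [← Equiv.sum_comp (Fin.consEquiv (fun _ => Bool)) (fun s => if Q s then (1:ℕ) else 0)]
  rw [Fintype.sum_prod_type, Fintype.sum_bool]
  rfl


/-- `NN n h j` = number of ±1-paths of length `n` started at height `h` that stay `≥ 0`
and end at height `j`. -/
def NN (n : ℕ) (h j : ℤ) : ℕ :=
  (Finset.univ.filter fun s : Fin n → Bool =>
    (∀ k ≤ n, 0 ≤ h + psum (ext s) k) ∧ h + psum (ext s) n = j).card

lemma NN_neg (n : ℕ) {h : ℤ} (j : ℤ) (hh : h < 0) : NN n h j = 0 := by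
  rw [NN, Finset.card_eq_zero, Finset.filter_eq_empty_iff]
  intro s _
  rintro ⟨h1, -⟩
  have := h1 0 (Nat.zero_le n)
  rw [psum_zero] at this
  omega

lemma cons_cond {n : ℕ} (b : Bool) (t : Fin n → Bool) {h : ℤ} (j : ℤ) (hh : 0 ≤ h) :
    ((∀ k ≤ n+1, 0 ≤ h + psum (ext (Fin.cons b t)) k) ∧ h + psum (ext (Fin.cons b t)) (n+1) = j)
    ↔ ((∀ k ≤ n, 0 ≤ (h + bval b) + psum (ext t) k) ∧ (h + bval b) + psum (ext t) n = j) := by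
  constructor
  · rintro ⟨H1, H2⟩
    refine ⟨fun k hk => ?_, ?_⟩
    · have := H1 (k+1) (by omega)
      rw [psum_ext_cons] at this
      linarith
    · rw [psum_ext_cons] at H2
      linarith
  · rintro ⟨H1, H2⟩
    refine ⟨fun k hk => ?_, ?_⟩
    · match k with
      | 0 => rw [psum_zero]; omega
      | (k'+1) =>
          rw [psum_ext_cons]
          have := H1 k' (by omega)
          linarith
    · rw [psum_ext_cons]
      linarith

lemma NN_succ (n : ℕ) {h : ℤ} (j : ℤ) (hh : 0 ≤ h) :
    NN (n+1) h j = NN n (h+1) j + NN n (h-1) j := by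
  rw [NN, card_filter_succ]
  congr 1
  · rw [NN]
    congr 1
    apply Finset.filter_congr
    intro t _
    rw [cons_cond true t j hh]
    norm_num [bval]
  · rw [NN]
    congr 1
    apply Finset.filter_congr
    intro t _
    rw [cons_cond false t j hh]
    simp only [bval, if_false, Bool.false_eq_true, ← sub_eq_add_neg]

/-- binomial helper. -/
def cc (n : ℕ) (x : ℤ) : ℤ := if 0 ≤ x ∧ 2 ∣ x then (n.choose (x/2).toNat : ℤ) else 0

lemma cc_even (n : ℕ) (y : ℤ) : cc n (2*y) = if 0 ≤ y then (n.choose y.toNat : ℤ) else 0 := by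
  rw [cc]
  by_cases hy : 0 ≤ y
  · rw [if_pos ⟨by omega, ⟨y, rfl⟩⟩, if_pos hy, Int.mul_ediv_cancel_left _ (by norm_num)]
  · rw [if_neg (by omega), if_neg hy]

lemma cc_odd (n : ℕ) (y : ℤ) : cc n (2*y+1) = 0 := by
  rw [cc, if_neg]
  rintro ⟨-, d⟩
  omega

lemma cc_succ (n : ℕ) (x : ℤ) : cc (n+1) x = cc n (x-2) + cc n x := by
  rcases Int.even_or_odd x with ⟨y, rfl⟩ | ⟨y, rfl⟩
  · rw [show y + y = 2*y by ring, show 2*y - 2 = 2*(y-1) by ring,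
      cc_even, cc_even, cc_even]
    rcases lt_trichotomy y 0 with hy | rfl | hy
    · rw [if_neg (by omega), if_neg (by omega), if_neg (by omega)]; ring
    · norm_num
    · rw [if_pos (by omega), if_pos (by omega), if_pos (by omega)]
      have h1 : y.toNat = (y-1).toNat + 1 := by omega
      rw [h1, Nat.choose_succ_succ']
      push_cast
      ring
  · rw [show 2*y+1-2 = 2*(y-1)+1 by ring, cc_odd, cc_odd, cc_odd]
    ring

lemma NN_closed (n : ℕ) : ∀ h j : ℤ, 0 ≤ h → 0 ≤ j →
    (NN n h j : ℤ) = cc n (n + j - h) - cc n (n + j + h + 2) := by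
  induction n with
  | zero =>
      intro h j hh hj
      have hNN : NN 0 h j = if h = j then 1 else 0 := by
        rw [NN]
        by_cases e : h = j
        · rw [if_pos e, Finset.filter_true_of_mem (fun s _ =>
            ⟨fun k hk => by
                have hk0 := Nat.le_zero.mp hk
                subst hk0
                rw [psum_zero]; omega,
              by rw [psum_zero]; omega⟩)]
          simp
        · rw [if_neg e, Finset.card_eq_zero, Finset.filter_eq_empty_iff]
          rintro s - ⟨-, h2⟩
          rw [psum_zero] at h2
          omega
      rw [hNN, Nat.cast_zero]
      rcases Int.even_or_odd (j - h) with ⟨y, hy⟩ | ⟨y, hy⟩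
      · rw [show (0:ℤ) + j - h = 2*y by omega, show (0:ℤ) + j + h + 2 = 2*(y+h+1) by omega,
          cc_even, cc_even]
        by_cases e : h = j
        · rw [if_pos e, if_pos (by omega), if_pos (by omega)]
          rw [show y.toNat = 0 by omega, show (y+h+1).toNat = (y+h).toNat + 1 by omega]
          simp
        · rw [if_neg e]
          by_cases h0 : 0 ≤ y
          · rw [if_pos h0, if_pos (by omega)]
            rw [show y.toNat = (y.toNat - 1) + 1 by omega,
              show (y+h+1).toNat = ((y+h+1).toNat - 1) + 1 by omega]
            simp [Nat.choose]
          · rw [if_neg h0, if_pos (by omega)]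
            rw [show (y+h+1).toNat = ((y+h+1).toNat - 1) + 1 by omega]
            simp [Nat.choose]
      · rw [show (0:ℤ) + j - h = 2*y+1 by omega, show (0:ℤ) + j + h + 2 = 2*(y+h+1)+1 by omega,
          cc_odd, cc_odd]
        rw [if_neg (by omega)]
        ring
  | succ n ih =>
      intro h j hh hj
      rw [NN_succ n j hh]
      by_cases h1 : 1 ≤ h
      · rw [show ((NN n (h+1) j + NN n (h-1) j : ℕ) : ℤ)
            = (NN n (h+1) j : ℤ) + (NN n (h-1) j : ℤ) by push_cast; ring]
        rw [ih (h+1) j (by omega) hj, ih (h-1) j (by omega) hj]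
        push_cast
        rw [show ((n:ℤ)+1) + j - h = (n + j + 2 - (h+1)) by ring]
        rw [show ((n:ℤ)+1) + j + h + 2 = (n + j + h + 3) by ring]
        rw [cc_succ n (n + j + 2 - (h+1)), cc_succ n (n + j + h + 3)]
        rw [show ((n:ℤ) + j + 2 - (h+1) - 2) = n + j - (h+1) by ring,
            show ((n:ℤ) + j + 2 - (h+1)) = n + j - (h-1) by ring,
            show ((n:ℤ) + j + h + 3 - 2) = n + j + (h-1) + 2 by ring,
            show ((n:ℤ) + j + h + 3) = n + j + (h+1) + 2 by ring]
        ring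
      · have h0 : h = 0 := by omega
        subst h0
        rw [show (0:ℤ) + 1 = 1 by norm_num, show (0:ℤ) - 1 = -1 by norm_num]
        rw [@NN_neg n (-1) j (by norm_num)]
        rw [show ((NN n 1 j + 0 : ℕ) : ℤ) = (NN n 1 j : ℤ) by push_cast; ring]
        rw [ih 1 j (by norm_num) hj]
        push_cast
        rw [show ((n:ℤ)+1) + j - 0 = (n + j + 1) by ring,
            show ((n:ℤ)+1) + j + 0 + 2 = (n + j + 3) by ring]
        rw [cc_succ n (n + j + 1), cc_succ n (n + j + 3)]
        rw [show ((n:ℤ) + j + 1 - 2) = n + j - 1 by ring,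
            show ((n:ℤ) + j + 3 - 2) = n + j + 1 by ring]
        ring


/-- number of nonnegative paths of length `n` -/
def gg (n : ℕ) : ℕ :=
  (Finset.univ.filter fun s : Fin n → Bool => ∀ k ≤ n, 0 ≤ psum (ext s) k).card

lemma gg_eq_sum (n : ℕ) :
    gg n = ∑ t ∈ Finset.range (n+1), NN n 0 (t : ℤ) := by
  rw [gg]
  rw [Finset.card_eq_sum_card_fiberwise
    (f := fun s : Fin n → Bool => (psum (ext s) n).toNat) (t := Finset.range (n+1))
    (fun s _ => Finset.mem_range.mpr (by
      show (psum (ext s) n).toNat < n + 1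
      have := psum_le (ext s) n; omega))]
  apply Finset.sum_congr rfl
  intro t _
  rw [Finset.filter_filter, NN]
  congr 1
  apply Finset.filter_congr
  intro s _
  simp only [zero_add]
  show _ ∧ (psum (ext s) n).toNat = t ↔ _
  constructor
  · rintro ⟨h1, h2⟩
    refine ⟨h1, ?_⟩
    have := h1 n le_rfl
    omega
  · rintro ⟨h1, h2⟩
    exact ⟨h1, by omega⟩

lemma telescope (F : ℕ → ℤ) (n : ℕ) :
    ∑ t ∈ Finset.range (n+1), (F t - F (t+2)) = F 0 + F 1 - F (n+1) - F (n+2) := by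
  induction n with
  | zero => rw [Finset.sum_range_one]; ring
  | succ n ih => rw [Finset.sum_range_succ, ih]; ring

lemma gg_closed (n : ℕ) : (gg n : ℤ) = n.choose ((n+1)/2) := by
  have tel := telescope (fun u : ℕ => cc n ((n:ℤ) + u)) n
  have hgg : (gg n : ℤ) = ∑ t ∈ Finset.range (n+1), (NN n 0 (t:ℤ) : ℤ) := by
    rw [gg_eq_sum]; push_cast; rfl
  rw [hgg]
  have hsum : ∀ t ∈ Finset.range (n+1),
      (NN n 0 (t:ℤ) : ℤ) = cc n ((n:ℤ) + (t:ℤ)) - cc n ((n:ℤ) + ((t+2:ℕ):ℤ)) := by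
    intro t _
    rw [NN_closed n 0 t le_rfl (by positivity)]
    rw [show (n:ℤ) + (t:ℤ) - 0 = (n:ℤ) + (t:ℤ) by ring,
        show (n:ℤ) + (t:ℤ) + 0 + 2 = (n:ℤ) + ((t+2 : ℕ) : ℤ) by push_cast; ring]
  rw [Finset.sum_congr rfl hsum, tel]
  have e1 : cc n ((n:ℤ) + ((n+1:ℕ):ℤ)) = 0 := by
    rw [show (n:ℤ) + ((n+1:ℕ):ℤ) = 2*(n:ℤ)+1 by push_cast; ring, cc_odd]
  have e2 : cc n ((n:ℤ) + ((n+2:ℕ):ℤ)) = 0 := by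
    rw [show (n:ℤ) + ((n+2:ℕ):ℤ) = 2*((n:ℤ)+1) by push_cast; ring, cc_even]
    rw [if_pos (by positivity), show ((n:ℤ)+1).toNat = n+1 by omega]
    rw [Nat.choose_eq_zero_of_lt (by omega)]
    norm_num
  rw [e1, e2]
  rcases Nat.even_or_odd n with ⟨a, ha⟩ | ⟨a, ha⟩
  · subst ha
    rw [show ((a+a:ℕ):ℤ) + ((0:ℕ):ℤ) = 2*(a:ℤ) by push_cast; ring, cc_even]
    rw [show ((a+a:ℕ):ℤ) + ((1:ℕ):ℤ) = 2*(a:ℤ)+1 by push_cast; ring, cc_odd]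
    rw [if_pos (by positivity), show ((a:ℤ)).toNat = a by omega]
    rw [show (a+a+1)/2 = a by omega]
    ring
  · subst ha
    rw [show ((2*a+1:ℕ):ℤ) + ((0:ℕ):ℤ) = 2*(a:ℤ)+1 by push_cast; ring, cc_odd]
    rw [show ((2*a+1:ℕ):ℤ) + ((1:ℕ):ℤ) = 2*((a:ℤ)+1) by push_cast; ring, cc_even]
    rw [if_pos (by positivity), show ((a:ℤ)+1).toNat = a+1 by omega]
    rw [show (2*a+1+1)/2 = a+1 by omega]
    ring


lemma ne_negone_iff_nonneg (a : ℕ → Bool) (n : ℕ) :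
    (∀ k ≤ n, psum a k ≠ -1) ↔ ∀ k ≤ n, 0 ≤ psum a k := by
  constructor
  · intro H k hk
    induction k with
    | zero => rw [psum_zero]
    | succ k ih =>
        have h1 := ih (by omega)
        have h2 := H (k+1) hk
        rw [psum_succ] at h2 ⊢
        cases hak : a k
        · rw [hak, bval_false] at h2; rw [bval_false]; omega
        · rw [hak, bval_true] at h2; rw [bval_true]; omega
  · intro H k hk
    have := H k hk
    omega

lemma ne_one_iff_nonpos (a : ℕ → Bool) (n : ℕ) :
    (∀ k ≤ n, psum a k ≠ 1) ↔ ∀ k ≤ n, psum a k ≤ 0 := by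
  constructor
  · intro H k hk
    induction k with
    | zero => rw [psum_zero]
    | succ k ih =>
        have h1 := ih (by omega)
        have h2 := H (k+1) hk
        rw [psum_succ] at h2 ⊢
        cases hak : a k
        · rw [hak, bval_false] at h2; rw [bval_false]; omega
        · rw [hak, bval_true] at h2; rw [bval_true]; omega
  · intro H k hk
    have := H k hk
    omega

lemma psum_ext_not {n : ℕ} (t : Fin n → Bool) (k : ℕ) (hk : k ≤ n) :
    psum (ext (fun i => !(t i))) k = - psum (ext t) k := by
  rw [psum, psum, ← Finset.sum_neg_distrib]
  apply Finset.sum_congr rfl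
  intro i hi
  have hin : i < n := lt_of_lt_of_le (Finset.mem_range.1 hi) hk
  rw [ext_lt _ hin, ext_lt _ hin]
  cases t ⟨i, hin⟩ <;> simp [bval]

lemma card_nonpos_eq_gg (n : ℕ) :
    (Finset.univ.filter fun t : Fin n → Bool => ∀ k ≤ n, psum (ext t) k ≤ 0).card = gg n := by
  rw [gg]
  apply Finset.card_bij (fun t _ => fun i => !(t i))
  · intro t ht
    rw [Finset.mem_filter] at ht ⊢
    refine ⟨Finset.mem_univ _, fun k hk => ?_⟩
    rw [psum_ext_not t k hk]
    have := ht.2 k hk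
    omega
  · intro t1 h1 t2 h2 e
    funext i
    have := congrFun e i
    simpa using this
  · intro t ht
    rw [Finset.mem_filter] at ht
    refine ⟨fun i => !(t i), ?_, ?_⟩
    · rw [Finset.mem_filter]
      refine ⟨Finset.mem_univ _, fun k hk => ?_⟩
      rw [psum_ext_not _ k hk]
      have := ht.2 k hk
      omega
    · funext i
      simp

/-- number of paths of length `n` that are never `0` at positive times -/
def nz (n : ℕ) : ℕ :=
  (Finset.univ.filter fun s : Fin n → Bool => ∀ k ≤ n, k ≠ 0 → psum (ext s) k ≠ 0).card

lemma nz_zero : nz 0 = 1 := by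
  rw [nz]
  rw [Finset.filter_true_of_mem (fun s _ => fun k hk hk0 => absurd (Nat.le_zero.mp hk) hk0)]
  simp

lemma nz_succ (n : ℕ) : nz (n+1) = 2 * gg n := by
  rw [nz, card_filter_succ]
  have hA : (Finset.univ.filter fun t : Fin n → Bool =>
      (fun s : Fin (n+1) → Bool => ∀ k ≤ n+1, k ≠ 0 → psum (ext s) k ≠ 0)
        (Fin.cons true t)).card = gg n := by
    rw [gg]
    congr 1
    apply Finset.filter_congr
    intro t _
    show (∀ k ≤ n+1, k ≠ 0 → psum (ext (Fin.cons true t)) k ≠ 0) ↔ _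
    constructor
    · intro H
      refine (ne_negone_iff_nonneg (ext t) n).mp fun k hk => ?_
      have := H (k+1) (by omega) (by omega)
      rw [psum_ext_cons, bval_true] at this
      omega
    · intro H k hk hk0
      match k, hk0 with
      | (k'+1), _ =>
        rw [psum_ext_cons, bval_true]
        have := H k' (by omega)
        omega
  have hB : (Finset.univ.filter fun t : Fin n → Bool =>
      (fun s : Fin (n+1) → Bool => ∀ k ≤ n+1, k ≠ 0 → psum (ext s) k ≠ 0)
        (Fin.cons false t)).card = gg n := by
    rw [← card_nonpos_eq_gg]
    congr 1
    apply Finset.filter_congr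
    intro t _
    show (∀ k ≤ n+1, k ≠ 0 → psum (ext (Fin.cons false t)) k ≠ 0) ↔ _
    constructor
    · intro H
      refine (ne_one_iff_nonpos (ext t) n).mp fun k hk => ?_
      have := H (k+1) (by omega) (by omega)
      rw [psum_ext_cons, bval_false] at this
      omega
    · intro H k hk hk0
      match k, hk0 with
      | (k'+1), _ =>
        rw [psum_ext_cons, bval_false]
        have := H k' (by omega)
        omega
  rw [hA, hB]
  ring

lemma nz_even (a : ℕ) : nz (2*a) = (2*a).choose a := by
  match a with
  | 0 => rw [nz_zero]; rfl
  | (a+1) =>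
      rw [show 2*(a+1) = (2*a+1)+1 by ring, nz_succ]
      have h1 : (gg (2*a+1) : ℤ) = (2*a+1).choose (a+1) := by
        rw [gg_closed, show (2*a+1+1)/2 = a+1 by omega]
      have h2 : gg (2*a+1) = (2*a+1).choose (a+1) := by exact_mod_cast h1
      have h3 : (2*a+1).choose (a+1) = (2*a+1).choose a := by
        rw [← Nat.choose_symm (by omega : a+1 ≤ 2*a+1), show 2*a+1-(a+1) = a by omega]
      have h4 : (2*a+1+1).choose (a+1) = (2*a+1).choose a + (2*a+1).choose (a+1) :=
        Nat.choose_succ_succ' (2*a+1) a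
      rw [h2, h4, h3]
      omega


lemma psum_formula (a : ℕ → Bool) (k : ℕ) :
    psum a k = 2 * (((Finset.range k).filter (fun i => a i = true)).card : ℤ) - k := by
  induction k with
  | zero => simp [psum]
  | succ k ih =>
      rw [psum_succ, ih, Finset.range_add_one, Finset.filter_insert]
      cases hak : a k
      · rw [if_neg (by simp [hak]), bval_false]
        push_cast
        ring
      · rw [if_pos (by simp [hak]), Finset.card_insert_of_notMem (by simp), bval_true]
        push_cast
        ring

lemma card_zero_end (K : ℕ) :
    (Finset.univ.filter fun s : Fin (2*K) → Bool => psum (ext s) (2*K) = 0).card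
      = (2*K).choose K := by
  have hiff : ∀ s : Fin (2*K) → Bool,
      (psum (ext s) (2*K) = 0) ↔ (Finset.univ.filter fun i : Fin (2*K) => s i = true).card = K := by
    intro s
    rw [psum_formula]
    have hc : ((Finset.range (2*K)).filter (fun i => ext s i = true)).card
        = (Finset.univ.filter fun i : Fin (2*K) => s i = true).card := by
      apply Finset.card_bij (fun i hi =>
        (⟨i, Finset.mem_range.1 (Finset.mem_filter.1 hi).1⟩ : Fin (2*K)))
      · intro i hi
        have h2 := (Finset.mem_filter.1 hi).2
        rw [Finset.mem_filter]
        refine ⟨Finset.mem_univ _, ?_⟩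
        rwa [ext_lt s (Finset.mem_range.1 (Finset.mem_filter.1 hi).1)] at h2
      · intro i1 h1 i2 h2 e
        simpa [Fin.mk.injEq] using e
      · intro j hj
        refine ⟨(j : ℕ), Finset.mem_filter.mpr ⟨Finset.mem_range.mpr j.isLt, ?_⟩, ?_⟩
        · rw [ext_lt s j.isLt]
          have := (Finset.mem_filter.1 hj).2
          simpa using this
        · simp
    rw [hc]
    constructor
    · intro h
      omega
    · intro h
      rw [h]
      push_cast
      ring
  rw [Finset.filter_congr (fun s _ => hiff s)]
  have hcard : ((Finset.univ : Finset (Fin (2*K))).powersetCard K).card = (2*K).choose K := by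
    rw [Finset.card_powersetCard, Finset.card_univ, Fintype.card_fin]
  rw [← hcard]
  apply Finset.card_bij (fun s _ => Finset.univ.filter fun i => s i = true)
  · intro s hs
    rw [Finset.mem_powersetCard]
    exact ⟨Finset.filter_subset _ _ |>.trans (Finset.subset_univ _) |>.trans (le_refl _),
      (Finset.mem_filter.1 hs).2⟩
  · intro s1 h1 s2 h2 e
    funext i
    have h := Finset.ext_iff.mp e i
    simp only [Finset.mem_filter, Finset.mem_univ, true_and] at h
    cases ha : s1 i <;> cases hb : s2 i <;> simp_all
  · intro A hA
    refine ⟨fun i => decide (i ∈ A), Finset.mem_filter.mpr ⟨Finset.mem_univ _, ?_⟩, ?_⟩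
    · rw [show (Finset.univ.filter fun i : Fin (2*K) => decide (i ∈ A) = true) = A from ?_]
      · exact (Finset.mem_powersetCard.1 hA).2
      · ext i
        simp
    · ext i
      simp


lemma card_filter_comp_equiv {α β : Type*} [Fintype α] [Fintype β]
    (e : α ≃ β) (Q : β → Prop) [DecidablePred Q] :
    (Finset.univ.filter fun a => Q (e a)).card = (Finset.univ.filter Q).card := by
  rw [Finset.card_filter, Finset.card_filter,
    ← Equiv.sum_comp e (fun b => if Q b then (1:ℕ) else 0)]

section Glue

variable {m k : ℕ}

def glue (hk : k ≤ m) (u : Fin (2*k) → Bool) (v : Fin (2*(m-k)) → Bool) :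
    Fin (2*m) → Bool :=
  fun i => if h : (i:ℕ) < 2*k then u ⟨i.1, h⟩ else v ⟨i.1 - 2*k, by omega⟩

lemma ext_glue_lt (hk : k ≤ m) (u : Fin (2*k) → Bool) (v : Fin (2*(m-k)) → Bool)
    {i : ℕ} (hi : i < 2*k) : ext (glue hk u v) i = ext u i := by
  rw [ext_lt _ (show i < 2*m by omega), ext_lt u hi, glue]
  exact dif_pos hi

lemma ext_glue_ge (hk : k ≤ m) (u : Fin (2*k) → Bool) (v : Fin (2*(m-k)) → Bool)
    {t : ℕ} (ht : t < 2*(m-k)) : ext (glue hk u v) (2*k + t) = ext v t := by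
  rw [ext_lt _ (show 2*k + t < 2*m by omega), ext_lt v ht, glue]
  rw [dif_neg (show ¬ ((⟨2*k+t, by omega⟩ : Fin (2*m)) : ℕ) < 2*k by simp)]
  congr 1
  simp

lemma psum_glue_low (hk : k ≤ m) (u : Fin (2*k) → Bool) (v : Fin (2*(m-k)) → Bool)
    {jj : ℕ} (hjj : jj ≤ 2*k) : psum (ext (glue hk u v)) jj = psum (ext u) jj :=
  psum_congr fun i hi => ext_glue_lt hk u v (by omega)

lemma psum_glue_high (hk : k ≤ m) (u : Fin (2*k) → Bool) (v : Fin (2*(m-k)) → Bool)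
    {t : ℕ} (ht : t ≤ 2*(m-k)) :
    psum (ext (glue hk u v)) (2*k + t) = psum (ext u) (2*k) + psum (ext v) t := by
  rw [psum_add, psum_glue_low hk u v le_rfl]
  congr 1
  exact psum_congr fun i hi => ext_glue_ge hk u v (by omega)

lemma glue_cond (hk : k ≤ m) (u : Fin (2*k) → Bool) (v : Fin (2*(m-k)) → Bool) :
    ((psum (ext (glue hk u v)) (2*k) = 0 ∧
        ∀ j ≤ 2*m, 2*k < j → psum (ext (glue hk u v)) j ≠ 0))
      ↔ ((psum (ext u) (2*k) = 0) ∧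
          (∀ t ≤ 2*(m-k), t ≠ 0 → psum (ext v) t ≠ 0)) := by
  rw [psum_glue_low hk u v le_rfl]
  constructor
  · rintro ⟨h0, hno⟩
    refine ⟨h0, fun t ht ht0 => ?_⟩
    have := hno (2*k + t) (by omega) (by omega)
    rw [psum_glue_high hk u v ht, h0, zero_add] at this
    exact this
  · rintro ⟨h0, hno⟩
    refine ⟨h0, fun j hj hj2 => ?_⟩
    obtain ⟨t, rfl⟩ : ∃ t, j = 2*k + t := ⟨j - 2*k, by omega⟩
    rw [psum_glue_high hk u v (by omega), h0, zero_add]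
    exact hno t (by omega) (by omega)

def splitEquiv (hk : k ≤ m) :
    ((Fin (2*k) → Bool) × (Fin (2*(m-k)) → Bool)) ≃ (Fin (2*m) → Bool) where
  toFun p := glue hk p.1 p.2
  invFun s := (fun i => s ⟨i.1, by omega⟩, fun i => s ⟨2*k + i.1, by omega⟩)
  left_inv p := by
    obtain ⟨u, v⟩ := p
    refine Prod.ext (funext fun i => ?_) (funext fun i => ?_)
    · show glue hk u v ⟨i.1, by omega⟩ = u i
      rw [glue]
      rw [dif_pos (show ((⟨i.1, by omega⟩ : Fin (2*m)) : ℕ) < 2*k from i.isLt)]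
    · show glue hk u v ⟨2*k + i.1, by omega⟩ = v i
      rw [glue]
      rw [dif_neg (show ¬ ((⟨2*k + i.1, by omega⟩ : Fin (2*m)) : ℕ) < 2*k by simp)]
      congr 1
      simp
  right_inv s := by
    funext i
    simp only [glue]
    by_cases h : (i : ℕ) < 2*k
    · rw [dif_pos h]
    · rw [dif_neg h]
      congr 1
      rw [Fin.mk.injEq]
      omega

end Glue

theorem main_count (m k : ℕ) (hk : k ≤ m) :
    (Finset.univ.filter fun s : Fin (2*m) → Bool =>
      psum (ext s) (2*k) = 0 ∧ ∀ j ≤ 2*m, 2*k < j → psum (ext s) j ≠ 0).card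
    = (2*k).choose k * (2*(m-k)).choose (m-k) := by
  rw [← card_zero_end k, ← nz_even (m-k), nz, ← Finset.card_product, ← Finset.filter_product,
    Finset.univ_product_univ]
  rw [← card_filter_comp_equiv (splitEquiv hk) (fun s =>
      psum (ext s) (2*k) = 0 ∧ ∀ j ≤ 2*m, 2*k < j → psum (ext s) j ≠ 0)]
  congr 1
  apply Finset.filter_congr
  rintro ⟨u, v⟩ -
  show (psum (ext (glue hk u v)) (2*k) = 0 ∧
      ∀ j ≤ 2*m, 2*k < j → psum (ext (glue hk u v)) j ≠ 0) ↔ _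
  rw [glue_cond hk u v]

end SRWAux


open SRWAux in
theorem srw_discrete_arcsine_law {Ω : Type*} [MeasurableSpace Ω]
    (P : Measure Ω) [IsProbabilityMeasure P] (ξ : ℕ → Ω → ℤ)
    (hm : ∀ i, Measurable (ξ i))
    (hindep : iIndepFun ξ P)
    (h1 : ∀ i, P {ω | ξ i ω = 1} = 1 / 2)
    (h2 : ∀ i, P {ω | ξ i ω = -1} = 1 / 2)
    (m : ℕ) (L : Ω → ℕ)
    (hL : ∀ ω, L ω = sSup {k | k ≤ 2 * m ∧ ∑ i ∈ Finset.range k, ξ i ω = 0}) :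
    ∀ k, k ≤ m → P {ω | L ω = 2 * k}
      = ENNReal.ofReal (((Nat.choose (2 * k) k : ℝ) / 2 ^ (2 * k)) *
          ((Nat.choose (2 * (m - k)) (m - k) : ℝ) / 2 ^ (2 * (m - k)))) := by
  intro k hk
  -- preimage formulation of the basic events
  have hpre : ∀ i (c : ℤ), ξ i ⁻¹' {c} = {ω | ξ i ω = c} := by
    intro i c
    ext ω
    simp
  have hhalf : ∀ i (b : Bool), P (ξ i ⁻¹' {bval b}) = 1/2 := by
    intro i b
    cases b
    · rw [hpre, bval_false]
      exact h2 i
    · rw [hpre, bval_true]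
      exact h1 i
  -- cylinder sets
  set C : (Fin (2*m) → Bool) → Set Ω :=
    fun s => ⋂ i ∈ Finset.range (2*m), ξ i ⁻¹' {bval (ext s i)} with hC
  have hCmeas : ∀ s, MeasurableSet (C s) := fun s =>
    MeasurableSet.biInter (Finset.range (2*m)).countable_toSet
      (fun i _ => (hm i) (measurableSet_singleton _))
  have hCprob : ∀ s, P (C s) = (1/2 : ENNReal) ^ (2*m) := by
    intro s
    rw [hC]
    rw [hindep.measure_inter_preimage_eq_mul (Finset.range (2*m))
      (fun i _ => measurableSet_singleton _)]
    rw [Finset.prod_congr rfl (fun i _ => hhalf i (ext s i))]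
    rw [Finset.prod_const, Finset.card_range]
  -- the good set
  set G : Set Ω := ⋂ i ∈ Finset.range (2*m), {ω | ξ i ω = 1 ∨ ξ i ω = -1} with hG
  have hGi_meas : ∀ i : ℕ, MeasurableSet {ω | ξ i ω = 1 ∨ ξ i ω = -1} := by
    intro i
    have : {ω | ξ i ω = 1 ∨ ξ i ω = -1} = ξ i ⁻¹' {1} ∪ ξ i ⁻¹' {-1} := by
      ext ω
      simp
    rw [this]
    exact ((hm i) (measurableSet_singleton _)).union ((hm i) (measurableSet_singleton _))
  have hGone : ∀ i : ℕ, P {ω | ξ i ω = 1 ∨ ξ i ω = -1} = 1 := by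
    intro i
    have hsplit : {ω | ξ i ω = 1 ∨ ξ i ω = -1} = {ω | ξ i ω = 1} ∪ {ω | ξ i ω = -1} := by
      ext ω
      simp
    rw [hsplit, measure_union ?_ (by rw [← hpre]; exact (hm i) (measurableSet_singleton _))]
    · rw [h1 i, h2 i, ENNReal.div_add_div_same, one_add_one_eq_two]
      exact ENNReal.div_self (show (2:ENNReal) ≠ 0 by norm_num) (show (2:ENNReal) ≠ ⊤ by norm_num)
    · rw [Set.disjoint_left]
      rintro ω hω1 hω2
      simp only [Set.mem_setOf_eq] at hω1 hω2
      omega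
  have hGc : P Gᶜ = 0 := by
    rw [hG, Set.compl_iInter₂]
    refine measure_biUnion_null_iff (Finset.range (2*m)).countable_toSet |>.mpr ?_
    intro i _
    exact (prob_compl_eq_zero_iff (hGi_meas i)).mpr (hGone i)
  -- the set of good sign patterns
  set Sfin : Finset (Fin (2*m) → Bool) := Finset.univ.filter (fun s =>
    psum (ext s) (2*k) = 0 ∧ ∀ j ≤ 2*m, 2*k < j → psum (ext s) j ≠ 0) with hSfin
  -- event identity
  have hEG : {ω | L ω = 2*k} ∩ G = ⋃ s ∈ Sfin, C s := by
    ext ω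
    constructor
    · rintro ⟨hE, hGω⟩
      rw [hG] at hGω
      have hGi : ∀ i, i < 2*m → (ξ i ω = 1 ∨ ξ i ω = -1) := fun i hi =>
        Set.mem_iInter₂.1 hGω i (Finset.mem_range.2 hi)
      have hE2 : L ω = 2*k := hE
      have hE' : sSup {j | j ≤ 2*m ∧ ∑ i ∈ Finset.range j, ξ i ω = 0} = 2*k :=
        (hL ω).symm.trans hE2
      have hT0 : (0:ℕ) ∈ {j | j ≤ 2*m ∧ ∑ i ∈ Finset.range j, ξ i ω = 0} :=
        ⟨Nat.zero_le _, by simp⟩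
      have hTb : BddAbove {j | j ≤ 2*m ∧ ∑ i ∈ Finset.range j, ξ i ω = 0} :=
        ⟨2*m, fun j hj => hj.1⟩
      have hmem2k := Nat.sSup_mem ⟨0, hT0⟩ hTb
      rw [hE'] at hmem2k
      set σ : Fin (2*m) → Bool := fun i => decide (ξ i.1 ω = 1) with hσ
      have hξσ : ∀ i, i < 2*m → ξ i ω = bval (ext σ i) := by
        intro i hi
        rw [ext_lt σ hi]
        show ξ i ω = bval (decide (ξ ((⟨i, hi⟩ : Fin (2*m)) : ℕ) ω = 1))
        simp only [Fin.val_mk]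
        rcases hGi i hi with h | h <;> rw [h] <;> simp [bval]
      have hsum : ∀ j, j ≤ 2*m → (∑ i ∈ Finset.range j, ξ i ω) = psum (ext σ) j := by
        intro j hj
        apply Finset.sum_congr rfl
        intro i hi
        exact hξσ i (by have := Finset.mem_range.1 hi; omega)
      refine Set.mem_iUnion₂.2 ⟨σ, ?_, ?_⟩
      · rw [hSfin, Finset.mem_filter]
        refine ⟨Finset.mem_univ _, ?_, ?_⟩
        · rw [← hsum (2*k) hmem2k.1]
          exact hmem2k.2
        · intro j hj hj2 hzero
          have hjT : j ∈ {j | j ≤ 2*m ∧ ∑ i ∈ Finset.range j, ξ i ω = 0} :=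
            ⟨hj, by rw [hsum j hj]; exact hzero⟩
          have := le_csSup hTb hjT
          rw [hE'] at this
          omega
      · rw [hC]
        refine Set.mem_iInter₂.2 fun i hi => ?_
        simp only [Set.mem_preimage, Set.mem_singleton_iff]
        exact hξσ i (Finset.mem_range.1 hi)
    · intro hUω
      obtain ⟨s, hsS, hωC⟩ := Set.mem_iUnion₂.1 hUω
      rw [hC] at hωC
      have hξs : ∀ i, i < 2*m → ξ i ω = bval (ext s i) := by
        intro i hi
        have := Set.mem_iInter₂.1 hωC i (Finset.mem_range.2 hi)
        simpa using this
      rw [hSfin, Finset.mem_filter] at hsS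
      obtain ⟨-, hz, hnz⟩ := hsS
      have hsum : ∀ j, j ≤ 2*m → (∑ i ∈ Finset.range j, ξ i ω) = psum (ext s) j := by
        intro j hj
        apply Finset.sum_congr rfl
        intro i hi
        exact hξs i (by have := Finset.mem_range.1 hi; omega)
      constructor
      · show L ω = 2*k
        rw [hL ω]
        apply le_antisymm
        · refine csSup_le ⟨0, ⟨Nat.zero_le _, by simp⟩⟩ fun j hj => ?_
          by_contra hlt
          push_neg at hlt
          exact hnz j hj.1 hlt (by rw [← hsum j hj.1]; exact hj.2)
        · apply le_csSup ⟨2*m, fun j hj => hj.1⟩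
          exact ⟨by omega, by rw [hsum (2*k) (by omega)]; exact hz⟩
      · show ω ∈ G
        rw [hG]
        refine Set.mem_iInter₂.2 fun i hi => ?_
        have := hξs i (Finset.mem_range.1 hi)
        simp only [Set.mem_setOf_eq]
        rw [this]
        cases ext s i
        · right
          rw [bval_false]
        · left
          rw [bval_true]
  -- disjointness of cylinders
  have hdisj : (↑Sfin : Set (Fin (2*m) → Bool)).PairwiseDisjoint C := by
    intro s _ s' _ hne
    obtain ⟨i, hi⟩ := Function.ne_iff.1 hne
    refine Set.disjoint_left.2 fun ω hω hω' => ?_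
    rw [hC] at hω hω'
    have e1 := Set.mem_iInter₂.1 hω i.1 (Finset.mem_range.2 i.isLt)
    have e2 := Set.mem_iInter₂.1 hω' i.1 (Finset.mem_range.2 i.isLt)
    simp only [Set.mem_preimage, Set.mem_singleton_iff] at e1 e2
    rw [e1, ext_lt s i.isLt, ext_lt s' i.isLt, Fin.eta] at e2
    apply hi
    cases hs : s i <;> cases hs' : s' i <;> rw [hs, hs'] at e2 <;> simp_all [bval]
  -- reduce to the intersection with the good set
  have hPE : P {ω | L ω = 2*k} = P ({ω | L ω = 2*k} ∩ G) := by
    apply le_antisymm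
    · calc P {ω | L ω = 2*k}
          = P (({ω | L ω = 2*k} ∩ G) ∪ ({ω | L ω = 2*k} ∩ Gᶜ)) := by
            rw [Set.inter_union_compl]
        _ ≤ P ({ω | L ω = 2*k} ∩ G) + P ({ω | L ω = 2*k} ∩ Gᶜ) := measure_union_le _ _
        _ ≤ P ({ω | L ω = 2*k} ∩ G) + 0 :=
            add_le_add_right (le_trans (measure_mono Set.inter_subset_right) hGc.le) _
        _ = P ({ω | L ω = 2*k} ∩ G) := add_zero _
    · exact measure_mono Set.inter_subset_left
  have hU : P (⋃ s ∈ Sfin, C s) = (Sfin.card : ENNReal) * (1/2 : ENNReal)^(2*m) := by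
    rw [measure_biUnion_finset hdisj (fun s _ => hCmeas s)]
    rw [Finset.sum_congr rfl (fun s _ => hCprob s), Finset.sum_const, nsmul_eq_mul]
  have hcard : Sfin.card = (2*k).choose k * (2*(m-k)).choose (m-k) := by
    rw [hSfin]
    exact main_count m k hk
  rw [show {ω | L ω = 2 * k} = {ω | L ω = 2*k} from rfl, hPE, hEG, hU, hcard]
  -- final arithmetic
  have hofr : ((((2*k).choose k * (2*(m-k)).choose (m-k) : ℕ)) : ENNReal)
      * (1/2 : ENNReal)^(2*m)
      = ENNReal.ofReal ((((2*k).choose k * (2*(m-k)).choose (m-k) : ℕ) : ℝ)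
          * (1/2 : ℝ)^(2*m)) := by
    rw [ENNReal.ofReal_mul (by positivity)]
    congr 1
    · exact (ENNReal.ofReal_natCast _).symm
    · rw [ENNReal.ofReal_pow (by norm_num : (0:ℝ) ≤ 1/2)]
      congr 1
      simp only [one_div]
      rw [ENNReal.ofReal_inv_of_pos (by norm_num : (0:ℝ) < 2), ENNReal.ofReal_ofNat]
  rw [hofr]
  congr 1
  push_cast
  rw [div_mul_div_comm, ← pow_add, show 2*k + 2*(m-k) = 2*m by omega,
    one_div, inv_pow, div_eq_mul_inv]
  try ring
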